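/- The number z of s-factors in the s-factorization of a string S is at most 2m, where m is the number of maximal runs in the run-length encoding of S. -/

import Mathlib

/-- `IsSFact S fs` : `fs` is the s-factorization (LZ factorization) of `S`.
Positions are 0-indexed: factor `i` starts at index `l = |f_1 ... f_{i-1}|`.
If the character `S[l]` does not occur earlier, the factor is that single character;
otherwise it is the longest prefix of `S.drop l` occurring at some earlier
starting index `p < l` (self-overlap allowed). -/
def IsSFact {α : Type*} (S : List α) (fs : List (List α)) : Prop :=
  fs.flatten = S ∧ (∀ f ∈ fs, f ≠ []) ∧
  ∀ i (h : i < fs.length),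
    ((¬ ∃ j < ((fs.take i).flatten).length, S[j]? = S[((fs.take i).flatten).length]?) →
        fs.get ⟨i, h⟩ = (S.drop ((fs.take i).flatten).length).take 1) ∧
    ((∃ j < ((fs.take i).flatten).length, S[j]? = S[((fs.take i).flatten).length]?) →
        (fs.get ⟨i, h⟩ <+: S.drop ((fs.take i).flatten).length ∧
         (∃ p < ((fs.take i).flatten).length, fs.get ⟨i, h⟩ <+: S.drop p) ∧
         ∀ g, g <+: S.drop ((fs.take i).flatten).length →
           (∃ p < ((fs.take i).flatten).length, g <+: S.drop p) →
           g.length ≤ (fs.get ⟨i, h⟩).length))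

set_option linter.unusedSectionVars false

section Aux

variable {α : Type*} [DecidableEq α]


private lemma d1 (l t : List α) (a : α) :
    (l.destutter' (· ≠ ·) a).length ≤ ((l ++ t).destutter' (· ≠ ·) a).length := by
  induction l generalizing a with
  | nil => simpa using Nat.succ_le_of_lt (List.length_pos_iff.mpr (List.destutter'_ne_nil _ _))
  | cons x l ih =>
      by_cases h : a ≠ x
      · simp only [List.cons_append, List.destutter'_cons, if_pos h, List.length_cons]
        exact Nat.succ_le_succ (ih x)
      · simp only [List.cons_append, List.destutter'_cons, if_neg h]
        exact ih a

private lemma d2 (l : List α) (a b c : α) (hbc : b ≠ c) :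
    ((l ++ [b]).destutter' (· ≠ ·) a).length + 1
      ≤ ((l ++ [b, c]).destutter' (· ≠ ·) a).length := by
  induction l generalizing a with
  | nil =>
      by_cases h : a ≠ b
      · simp [List.destutter'_cons, h, hbc]
      · push_neg at h; subst h
        simp [List.destutter'_cons, hbc]
  | cons x l ih =>
      by_cases h : a ≠ x
      · simp only [List.cons_append, List.destutter'_cons, if_pos h, List.length_cons]
        exact Nat.succ_le_succ (ih x)
      · simp only [List.cons_append, List.destutter'_cons, if_neg h]
        exact ih a

private lemma dmono {u v : List α} (h : u <+: v) :
    (u.destutter (· ≠ ·)).length ≤ (v.destutter (· ≠ ·)).length := by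
  obtain ⟨t, rfl⟩ := h
  cases u with
  | nil => simp
  | cons d rest => simpa [List.destutter_cons'] using d1 rest t d

private lemma dincr (u : List α) (b c : α) (hbc : b ≠ c) :
    ((u ++ [b]).destutter (· ≠ ·)).length + 1
      ≤ ((u ++ [b, c]).destutter (· ≠ ·)).length := by
  cases u with
  | nil => simp [List.destutter_cons', List.destutter'_cons, hbc]
  | cons d rest =>
      simpa [List.cons_append, List.destutter_cons'] using d2 rest d b c hbc

private lemma tmono (S : List α) {m n : ℕ} (h : m ≤ n) : S.take m <+: S.take n := by
  have : S.take m = (S.take n).take m := by rw [List.take_take, Nat.min_eq_left h]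
  rw [this]; exact List.take_prefix _ _

private lemma L_succ (fs : List (List α)) (i : ℕ) (hi : i < fs.length) :
    ((fs.take (i + 1)).flatten).length
      = ((fs.take i).flatten).length + fs[i].length := by
  rw [List.take_succ, List.getElem?_eq_getElem hi, Option.toList_some,
    List.flatten_append, List.length_append, List.flatten_cons, List.flatten_nil,
    List.append_nil]

private lemma L_lt (fs : List (List α)) (hne : ∀ f ∈ fs, f ≠ []) (i : ℕ)
    (hi : i < fs.length) :
    ((fs.take i).flatten).length < ((fs.take (i + 1)).flatten).length := by
  rw [L_succ fs i hi]
  have : fs[i] ≠ [] := hne _ (List.getElem_mem hi)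
  have := List.length_pos_iff.mpr this
  omega

private lemma L_lt_of_lt (fs : List (List α)) (hne : ∀ f ∈ fs, f ≠ []) {i j : ℕ}
    (hij : i < j) (hj : j ≤ fs.length) :
    ((fs.take i).flatten).length < ((fs.take j).flatten).length := by
  induction j with
  | zero => omega
  | succ j ih =>
      rcases Nat.lt_or_ge i j with h | h
      · exact lt_trans (ih h (by omega)) (L_lt fs hne j (by omega))
      · have : i = j := by omega
        subst this
        exact L_lt fs hne i (by omega)

private lemma flatten_take_prefix (fs : List (List α)) (S : List α)
    (hflat : fs.flatten = S) (i : ℕ) : (fs.take i).flatten <+: S := by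
  refine ⟨(fs.drop i).flatten, ?_⟩
  rw [← List.flatten_append, List.take_append_drop, hflat]

private lemma flatten_take_eq (fs : List (List α)) (S : List α)
    (hflat : fs.flatten = S) (i : ℕ) :
    (fs.take i).flatten = S.take ((fs.take i).flatten).length :=
  List.prefix_iff_eq_take.mp (flatten_take_prefix fs S hflat i)

private lemma key (S : List α) (fs : List (List α)) (hfs : IsSFact S fs)
    (i : ℕ) (h2 : i + 2 < fs.length) :
    ((S.take (((fs.take i).flatten).length + 1)).destutter (· ≠ ·)).length + 1
      ≤ ((S.take (((fs.take (i+2)).flatten).length + 1)).destutter (· ≠ ·)).length := by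
  obtain ⟨hflat, hne, hspec⟩ := hfs
  set l0 := ((fs.take i).flatten).length with hl0
  set l := ((fs.take (i+1)).flatten).length with hl
  set l' := ((fs.take (i+2)).flatten).length with hl'
  have hzS : ((fs.take fs.length).flatten).length = S.length := by
    rw [List.take_length, hflat]
  have h01 : l0 < l := L_lt fs hne i (by omega)
  have h12 : l < l' := L_lt fs hne (i+1) (by omega)
  have h2S : l' < S.length := by
    rw [← hzS]; exact L_lt_of_lt fs hne h2 (le_refl _)
  have hlS : l < S.length := by omega
  have hlm1 : l - 1 < S.length := by omega
  by_cases hcase : S[l - 1]'hlm1 = S[l]'hlS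
  case neg =>
    have htl : S.take l = S.take (l-1) ++ [S[l-1]'hlm1] := by
      have h0 := List.take_succ (l := S) (i := l - 1)
      rw [List.getElem?_eq_getElem hlm1] at h0
      have h' : l - 1 + 1 = l := by omega
      rw [h'] at h0
      simpa using h0
    have htl1 : S.take (l+1) = S.take (l-1) ++ [S[l-1]'hlm1, S[l]'hlS] := by
      rw [List.take_succ, List.getElem?_eq_getElem hlS, htl, Option.toList_some,
        List.append_assoc]
      rfl
    have hstep := dincr (S.take (l-1)) _ _ hcase
    rw [← htl, ← htl1] at hstep
    have hA : ((S.take (l0+1)).destutter (· ≠ ·)).length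
        ≤ ((S.take l).destutter (· ≠ ·)).length := dmono (tmono S (by omega))
    have hB : ((S.take (l+1)).destutter (· ≠ ·)).length
        ≤ ((S.take (l'+1)).destutter (· ≠ ·)).length := dmono (tmono S (by omega))
    omega
  case pos =>
    set a := S[l]'hlS with ha
    have hex : ∃ j < l, S[j]? = S[l]? := by
      refine ⟨l - 1, by omega, ?_⟩
      rw [List.getElem?_eq_getElem hlm1, List.getElem?_eq_getElem hlS, hcase]
    have hk : i + 1 < fs.length := by omega
    obtain ⟨hpref, -, hmax⟩ := (hspec (i+1) hk).2 hex
    set g := (S.drop l).takeWhile (fun x => x == a) with hg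
    set t := g.length with ht
    have hgpre : g <+: S.drop l := List.takeWhile_prefix _
    have hgrep : g = List.replicate t a := by
      rw [List.eq_replicate_iff]
      refine ⟨rfl, fun b hb => ?_⟩
      have := List.mem_takeWhile_imp hb
      simpa using this
    have hdl : S.drop l = a :: S.drop (l+1) := by
      rw [List.drop_eq_getElem_cons hlS]
    have ht1 : 1 ≤ t := by
      rw [ht, hg, hdl, List.takeWhile_cons_of_pos (by simp)]
      simp
    have hdl1 : S.drop (l-1) = a :: S.drop l := by
      have h0 := List.drop_eq_getElem_cons (l := S) (i := l - 1) hlm1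
      have h' : l - 1 + 1 = l := by omega
      rw [h'] at h0
      rw [h0, hcase]
    have hgpre1 : g <+: S.drop (l-1) := by
      rw [hdl1]
      have h1 : g <+: a :: g := by
        rw [hgrep]
        exact ⟨[a], by rw [← List.replicate_succ', ← List.replicate_succ]⟩
      exact h1.trans (List.cons_prefix_cons.mpr ⟨rfl, hgpre⟩)
    have htf : t ≤ (fs.get ⟨i+1, hk⟩).length := hmax g hgpre ⟨l - 1, by omega, hgpre1⟩
    have hl'eq : l' = l + (fs.get ⟨i+1, hk⟩).length := by
      rw [hl', hl, L_succ fs (i+1) hk]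
      rfl
    have heS : l + t < S.length := by omega
    have hdw : (S.drop l).dropWhile (fun x => x == a) ≠ [] := by
      intro hemp
      have h0 := List.takeWhile_append_dropWhile (p := fun x => x == a) (l := S.drop l)
      rw [hemp, List.append_nil, ← hg] at h0
      have h1 : t = (S.drop l).length := by rw [ht, h0]
      rw [List.length_drop] at h1
      omega
    obtain ⟨x, d', hd⟩ := List.exists_cons_of_ne_nil hdw
    have hxa : x ≠ a := by
      have h0 := List.head?_dropWhile_not (fun x => x == a) (S.drop l)
      rw [hd] at h0
      simpa using h0
    have hsplit : S.drop l = g ++ x :: d' := by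
      conv_lhs => rw [← List.takeWhile_append_dropWhile (p := fun x => x == a) (l := S.drop l)]
      rw [hd, ← hg]
    have hSx : S[l+t]'heS = x := by
      calc S[l+t]'heS = (S.drop l)[t]'(by simp; omega) := List.getElem_drop' (xs := S) (h := heS)
        _ = (g ++ x :: d')[t]'(by rw [← hsplit]; simp; omega) := List.getElem_of_eq hsplit _
        _ = (x :: d')[t - g.length]'(by rw [ht]; simp) := List.getElem_append_right (by omega)
        _ = (x :: d')[0]'(by simp) := getElem_congr rfl (by rw [ht]; simp) _
        _ = x := rfl
    have hprev : l + t - 1 < S.length := by omega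
    have hSprev : S[l+t-1]'hprev = a := by
      have heq : l + t - 1 = l + (t - 1) := by omega
      have h1 : S[l+(t-1)]'(by omega) = a := by
        calc S[l+(t-1)]'(by omega) = (S.drop l)[t-1]'(by simp; omega) :=
              List.getElem_drop' (xs := S) (h := by omega)
          _ = g[t-1]'(by omega) := (hgpre.getElem (by omega)).symm
          _ = (List.replicate t a)[t-1]'(by simp; omega) := List.getElem_of_eq hgrep _
          _ = a := List.getElem_replicate ..
      have h2 : S[l+t-1]? = S[l+(t-1)]? := by rw [heq]
      rw [List.getElem?_eq_getElem hprev,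
        List.getElem?_eq_getElem (show l+(t-1) < S.length by omega), h1] at h2
      simpa using h2
    have hbc : S[l+t-1]'hprev ≠ S[l+t]'heS := by
      rw [hSprev, hSx]; exact fun h => hxa h.symm
    have htke : S.take (l+t) = S.take (l+t-1) ++ [S[l+t-1]'hprev] := by
      have h0 := List.take_succ (l := S) (i := l+t-1)
      rw [List.getElem?_eq_getElem hprev] at h0
      have h' : l + t - 1 + 1 = l + t := by omega
      rw [h'] at h0
      simpa using h0
    have htke1 : S.take (l+t+1) = S.take (l+t-1) ++ [S[l+t-1]'hprev, S[l+t]'heS] := by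
      rw [List.take_succ, List.getElem?_eq_getElem heS, htke, Option.toList_some,
        List.append_assoc]
      rfl
    have hstep := dincr (S.take (l+t-1)) _ _ hbc
    rw [← htke, ← htke1] at hstep
    have hA : ((S.take (l0+1)).destutter (· ≠ ·)).length
        ≤ ((S.take (l+t)).destutter (· ≠ ·)).length := dmono (tmono S (by omega))
    have hB : ((S.take (l+t+1)).destutter (· ≠ ·)).length
        ≤ ((S.take (l'+1)).destutter (· ≠ ·)).length := dmono (tmono S (by omega))
    omega

end Aux

/-- The number of s-factors is at most twice the number of maximal runs of `S`
(the length of the run-length encoding, i.e. of `S` with adjacent duplicates removed). -/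
theorem stmt1 {α : Type*} [DecidableEq α] (S : List α) (fs : List (List α))
    (hfs : IsSFact S fs) :
    fs.length ≤ 2 * (S.destutter (· ≠ ·)).length := by
  by_contra hcon
  push_neg at hcon
  set m := (S.destutter (· ≠ ·)).length with hm
  have hz : 2 * m < fs.length := hcon
  have hSne : S ≠ [] := by
    intro h
    have hfs0 : fs = [] := by
      cases fs with
      | nil => rfl
      | cons f fs' =>
          have hf := hfs.2.1 f (by simp)
          have h1 := hfs.1
          rw [h] at h1
          simp only [List.flatten_cons, List.append_eq_nil_iff] at h1
          exact absurd h1.1 hf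
    rw [hfs0] at hz
    simp at hz
  have hTle : ∀ n, ((S.take n).destutter (· ≠ ·)).length ≤ m :=
    fun n => dmono (List.take_prefix n S)
  have hmain : ∀ j, 2*j < fs.length →
      j + 1 ≤ ((S.take (((fs.take (2*j)).flatten).length + 1)).destutter (· ≠ ·)).length := by
    intro j
    induction j with
    | zero =>
        intro _
        have h0 : ((fs.take (2*0)).flatten).length = 0 := by simp
        rw [h0]
        have hne1 : S.take 1 ≠ [] := by
          simp [List.take_eq_nil_iff, hSne]
        have hpos : (S.take 1).destutter (· ≠ ·) ≠ [] :=
          fun h => hne1 ((List.destutter_eq_nil _).mp h)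
        exact List.length_pos_iff.mpr hpos
    | succ j ih =>
        intro hj
        have hkey := key S fs hfs (2*j) (by omega)
        have hih := ih (by omega)
        have heq : 2*j+2 = 2*(j+1) := by ring
        rw [heq] at hkey
        omega
  have h1 := hmain m (by omega)
  have h2 := hTle (((fs.take (2*m)).flatten).length + 1)
  omega
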